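/- arXiv:1508.05500 — 2 statements merged into one kernel-verified Lean document; each statement's English description precedes it below -/
import Mathlib

section
/- Let φ₁(s) = s, φ₂(s) = (1/2)(s² − 1/12), φ₃(s) = s³/6, φ₄(s) = (1/24)(s⁴ − 1/80). Given real numbers W₊, W₋, W̄₀, W̄₊₁, W̄₋₁, there exist unique real numbers a, d₁, d₂, d₃, d₄ such that p(s) = a + d₁φ₁(s) + d₂φ₂(s) + d₃φ₃(s) + d₄φ₄(s) satisfies p(1/2) = W₊, p(−1/2) = W₋, ∫_{−1/2}^{1/2} p = W̄₀, ∫_{1/2}^{3/2} p = W̄₊₁, and ∫_{−3/2}^{−1/2} p = W̄₋₁; moreover the coefficients are a = W̄₀, d₁ = (1/8)(W̄₋₁ − W̄₊₁ + 10W₊ − 10W₋), d₂ = (1/4)(30(W₊ + W₋) − 58W̄₀ − W̄₊₁ − W̄₋₁), d₃ = 3(W̄₊₁ − W̄₋₁) − 6(W₊ − W₋), and d₄ = 10(W̄₊₁ + W̄₋₁) + 100W̄₀ − 60(W₊ + W₋). -/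
set_option maxHeartbeats 1000000

lemma poly_integral (A B C D E a b : ℝ) :
    (∫ s in a..b, (A + B * s + C * s ^ 2 + D * s ^ 3 + E * s ^ 4)) =
      (A * b + B / 2 * b ^ 2 + C / 3 * b ^ 3 + D / 4 * b ^ 4 + E / 5 * b ^ 5) -
      (A * a + B / 2 * a ^ 2 + C / 3 * a ^ 3 + D / 4 * a ^ 4 + E / 5 * a ^ 5) := by
  have h : ∀ s : ℝ, HasDerivAt
      (fun x : ℝ => A * x + B / 2 * x ^ 2 + C / 3 * x ^ 3 + D / 4 * x ^ 4 + E / 5 * x ^ 5)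
      (A + B * s + C * s ^ 2 + D * s ^ 3 + E * s ^ 4) s := by
    intro s
    have h1 : HasDerivAt (fun x : ℝ => x) 1 s := hasDerivAt_id s
    have := ((h1.const_mul A).add ((hasDerivAt_pow 2 s).const_mul (B/2))).add
      ((((hasDerivAt_pow 3 s).const_mul (C/3)).add ((hasDerivAt_pow 4 s).const_mul (D/4))).add
        ((hasDerivAt_pow 5 s).const_mul (E/5)))
    convert this using 1
    · rfl
    · rfl
    · ext x; simp only [Pi.add_apply]; ring
    · push_cast; ring
  exact intervalIntegral.integral_eq_sub_of_hasDerivAt (fun s _ => h s)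
    ((Continuous.intervalIntegrable (by continuity) a b))

/-- Fifth-order HFVS reconstruction: with the basis `φ₁(s)=s`, `φ₂(s)=(1/2)(s²−1/12)`,
`φ₃(s)=s³/6`, `φ₄(s)=(1/24)(s⁴−1/80)`, the two interface values and the three cell averages
determine unique coefficients `a, d₁, d₂, d₃, d₄`, given by the explicit formulas of the paper. -/
theorem hfvs_fifth_order_reconstruction (Wp Wm W0 Wp1 Wm1 : ℝ) :
    let p : (ℝ × ℝ × ℝ × ℝ × ℝ) → ℝ → ℝ := fun c s =>
      c.1 + c.2.1 * s + c.2.2.1 * ((1/2) * (s^2 - 1/12)) +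
        c.2.2.2.1 * (s^3 / 6) + c.2.2.2.2 * ((1/24) * (s^4 - 1/80))
    let Q : (ℝ × ℝ × ℝ × ℝ × ℝ) → Prop := fun c =>
      p c (1/2) = Wp ∧ p c (-(1:ℝ)/2) = Wm ∧
      (∫ s in (-(1:ℝ)/2)..(1/2), p c s) = W0 ∧
      (∫ s in ((1:ℝ)/2)..(3/2), p c s) = Wp1 ∧
      (∫ s in (-(3:ℝ)/2)..(-(1:ℝ)/2), p c s) = Wm1
    (∃! c : ℝ × ℝ × ℝ × ℝ × ℝ, Q c) ∧
    (∀ c : ℝ × ℝ × ℝ × ℝ × ℝ, Q c →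
      c = (W0,
           (1/8) * (Wm1 - Wp1 + 10 * Wp - 10 * Wm),
           (1/4) * (30 * (Wp + Wm) - 58 * W0 - Wp1 - Wm1),
           3 * (Wp1 - Wm1) - 6 * (Wp - Wm),
           10 * (Wp1 + Wm1) + 100 * W0 - 60 * (Wp + Wm))) := by
  intro p Q
  have hint : ∀ (c : ℝ × ℝ × ℝ × ℝ × ℝ) (a b : ℝ),
      (∫ s in a..b, p c s) =
        ((c.1 - c.2.2.1/24 - c.2.2.2.2/1920) * b + c.2.1 / 2 * b ^ 2 +
          (c.2.2.1/2) / 3 * b ^ 3 + (c.2.2.2.1/6) / 4 * b ^ 4 + (c.2.2.2.2/24) / 5 * b ^ 5) -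
        ((c.1 - c.2.2.1/24 - c.2.2.2.2/1920) * a + c.2.1 / 2 * a ^ 2 +
          (c.2.2.1/2) / 3 * a ^ 3 + (c.2.2.2.1/6) / 4 * a ^ 4 + (c.2.2.2.2/24) / 5 * a ^ 5) := by
    intro c a b
    rw [show (fun s => p c s) = (fun s : ℝ =>
        (c.1 - c.2.2.1/24 - c.2.2.2.2/1920) + c.2.1 * s + (c.2.2.1/2) * s ^ 2 +
          (c.2.2.2.1/6) * s ^ 3 + (c.2.2.2.2/24) * s ^ 4) from funext fun s => by
      simp only [p]; ring]
    exact poly_integral _ _ _ _ _ a b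
  have hQ : ∀ c : ℝ × ℝ × ℝ × ℝ × ℝ, Q c ↔
      c = (W0,
           (1/8) * (Wm1 - Wp1 + 10 * Wp - 10 * Wm),
           (1/4) * (30 * (Wp + Wm) - 58 * W0 - Wp1 - Wm1),
           3 * (Wp1 - Wm1) - 6 * (Wp - Wm),
           10 * (Wp1 + Wm1) + 100 * W0 - 60 * (Wp + Wm)) := by
    rintro ⟨a, d1, d2, d3, d4⟩
    constructor
    · rintro ⟨h1, h2, h3, h4, h5⟩
      rw [hint] at h3 h4 h5
      simp only [p] at h1 h2
      norm_num at h1 h2 h3 h4 h5 ⊢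
      refine ⟨by linarith, by linarith, by linarith, by linarith, by linarith⟩
    · intro h
      simp only [Prod.mk.injEq] at h
      obtain ⟨rfl, rfl, rfl, rfl, rfl⟩ := h
      refine ⟨?_, ?_, ?_, ?_, ?_⟩
      · simp only [p]; norm_num; ring
      · simp only [p]; norm_num; ring
      · rw [hint]; norm_num; ring
      · rw [hint]; norm_num; ring
      · rw [hint]; norm_num; ring
  refine ⟨⟨_, (hQ _).mpr rfl, fun c hc => (hQ c).mp hc⟩, fun c hc => (hQ c).mp hc⟩
end

section
/- Let q : ℝ → ℝ be a polynomial of degree at most 4. Set W₊ = q(1/2), W₋ = q(−1/2), W̄₀ = ∫_{−1/2}^{1/2} q, W̄₊₁ = ∫_{1/2}^{3/2} q, W̄₋₁ = ∫_{−3/2}^{−1/2} q. Then the unique polynomial p of degree at most 4 satisfying p(1/2) = W₊, p(−1/2) = W₋, ∫_{−1/2}^{1/2} p = W̄₀, ∫_{1/2}^{3/2} p = W̄₊₁, ∫_{−3/2}^{−1/2} p = W̄₋₁ is p = q. In particular, the fifth-order HFVS reconstruction reproduces quartic polynomials exactly. -/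
lemma hfvs_integral_aux (f : Polynomial ℝ) (hf : f.natDegree ≤ 4) (a b : ℝ) :
    (∫ s in a..b, f.eval s)
      = ∑ i ∈ Finset.range 5, f.coeff i * ((b ^ (i+1) - a ^ (i+1)) / (i+1)) := by
  have hev : ∀ s : ℝ, f.eval s = ∑ i ∈ Finset.range 5, f.coeff i * s ^ i := fun s =>
    Polynomial.eval_eq_sum_range' (lt_of_le_of_lt hf (by norm_num)) s
  simp_rw [hev]
  rw [intervalIntegral.integral_finset_sum]
  · refine Finset.sum_congr rfl fun i _ => ?_
    rw [intervalIntegral.integral_const_mul, integral_pow]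
  · intro i _
    exact ((continuous_const.mul (continuous_pow i)).intervalIntegrable a b)

/-- Exactness (polynomial reproduction) of the fifth-order HFVS reconstruction:
a polynomial of degree at most 4 is uniquely determined by its values at `s = ±1/2` and
its averages over the three cells `[−3/2,−1/2]`, `[−1/2,1/2]`, `[1/2,3/2]`; in particular the
reconstruction reproduces quartic polynomials exactly. -/
theorem hfvs_fifth_order_exactness
    (q : Polynomial ℝ) (hq : q.natDegree ≤ 4) :
    ∀ p : Polynomial ℝ, p.natDegree ≤ 4 →
      p.eval (1/2 : ℝ) = q.eval (1/2 : ℝ) →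
      p.eval (-(1:ℝ)/2) = q.eval (-(1:ℝ)/2) →
      (∫ s in (-(1:ℝ)/2)..(1/2), p.eval s) = (∫ s in (-(1:ℝ)/2)..(1/2), q.eval s) →
      (∫ s in ((1:ℝ)/2)..(3/2), p.eval s) = (∫ s in ((1:ℝ)/2)..(3/2), q.eval s) →
      (∫ s in (-(3:ℝ)/2)..(-(1:ℝ)/2), p.eval s) = (∫ s in (-(3:ℝ)/2)..(-(1:ℝ)/2), q.eval s) →
      p = q := by
  intro p hp h1 h2 h3 h4 h5
  have hev : ∀ (f : Polynomial ℝ), f.natDegree ≤ 4 → ∀ x : ℝ,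
      f.eval x = ∑ i ∈ Finset.range 5, f.coeff i * x ^ i := fun f hf x =>
    Polynomial.eval_eq_sum_range' (lt_of_le_of_lt hf (by norm_num)) x
  rw [hev p hp, hev q hq] at h1 h2
  rw [hfvs_integral_aux p hp, hfvs_integral_aux q hq] at h3 h4 h5
  simp only [Finset.sum_range_succ, Finset.sum_range_zero] at h1 h2 h3 h4 h5
  norm_num at h1 h2 h3 h4 h5
  have c0 : p.coeff 0 = q.coeff 0 := by linarith
  have c1 : p.coeff 1 = q.coeff 1 := by linarith
  have c2 : p.coeff 2 = q.coeff 2 := by linarith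
  have c3 : p.coeff 3 = q.coeff 3 := by linarith
  have c4 : p.coeff 4 = q.coeff 4 := by linarith
  ext n
  match n with
  | 0 => exact c0
  | 1 => exact c1
  | 2 => exact c2
  | 3 => exact c3
  | 4 => exact c4
  | (m+5) =>
    rw [Polynomial.coeff_eq_zero_of_natDegree_lt (lt_of_le_of_lt hp (by omega)),
        Polynomial.coeff_eq_zero_of_natDegree_lt (lt_of_le_of_lt hq (by omega))]
end
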